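/- Quantum Bayesian Inference Theorem, backward direction: Let τ be a quantum state on ℂ^n ⊗ ℂ^m (a positive semidefinite trace-1 matrix indexed by Fin n × Fin m) with proj(τ) positive definite, and let q be a predicate (effect) on ℂ^m such that tr(τ * (1 ⊗ q)) ≠ 0 and tr(proj(τ) * (extr(τ) ≪ q)) ≠ 0. Then the first marginal of the lower conditioning of τ by 1 ⊗ q equals the transpose of the upper conditioning of proj(τ) by the backward-transformed predicate: M₁(τ|_{1 ⊗ q}) = (proj(τ)|^{extr(τ) ≪ q})ᵀ. Here 1 ⊗ q is the Kronecker product (1 ⊗ q) (i,k) (j,ℓ) := δ_{i j} * q k ℓ, and √(1 ⊗ q) = 1 ⊗ √q. -/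

import Mathlib

open Matrix Kronecker
open scoped ComplexOrder

noncomputable section

/-- Transpose of the first marginal of a joint quantum state. -/
def qproj {n m : ℕ} (τ : Matrix (Fin n × Fin m) (Fin n × Fin m) ℂ) :
    Matrix (Fin n) (Fin n) ℂ :=
  Matrix.of fun i j => ∑ k, τ (j, k) (i, k)

/-- The removed `Matrix.PosSemidef.sqrt`, with its old definition. -/
def Matrix.PosSemidef.sqrt {𝕜 : Type*} [RCLike 𝕜] {n : Type*} [Fintype n] [DecidableEq n]
    {A : Matrix n n 𝕜} (hA : A.PosSemidef) : Matrix n n 𝕜 :=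
  hA.1.eigenvectorUnitary.1 * diagonal ((↑) ∘ (√·) ∘ hA.1.eigenvalues) *
    (star hA.1.eigenvectorUnitary : Matrix n n 𝕜)

theorem Matrix.PosSemidef.sqrt_mul_self {𝕜 : Type*} [RCLike 𝕜] {n : Type*} [Fintype n]
    [DecidableEq n] {A : Matrix n n 𝕜} (hA : A.PosSemidef) : hA.sqrt * hA.sqrt = A := by
  have hU : (star hA.1.eigenvectorUnitary : Matrix n n 𝕜) * hA.1.eigenvectorUnitary.1 = 1 :=
    Unitary.star_mul_self_of_mem hA.1.eigenvectorUnitary.2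
  have hD : diagonal (((↑) ∘ (√·) ∘ hA.1.eigenvalues : n → 𝕜)) *
      diagonal ((↑) ∘ (√·) ∘ hA.1.eigenvalues) = diagonal (RCLike.ofReal ∘ hA.1.eigenvalues) := by
    rw [diagonal_mul_diagonal]
    congr 1
    funext i
    simp only [Function.comp_apply]
    rw [← RCLike.ofReal_mul, Real.mul_self_sqrt (hA.eigenvalues_nonneg i)]
  conv_rhs => rw [hA.1.spectral_theorem, Unitary.conjStarAlgAut_apply]
  unfold Matrix.PosSemidef.sqrt
  calc _ = hA.1.eigenvectorUnitary.1 * diagonal ((↑) ∘ (√·) ∘ hA.1.eigenvalues) *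
        ((star hA.1.eigenvectorUnitary : Matrix n n 𝕜) * hA.1.eigenvectorUnitary.1) *
        diagonal ((↑) ∘ (√·) ∘ hA.1.eigenvalues) *
        (star hA.1.eigenvectorUnitary : Matrix n n 𝕜) := by simp only [Matrix.mul_assoc]
    _ = _ := by rw [hU, Matrix.mul_one, Matrix.mul_assoc _ (diagonal _) (diagonal _), hD]

/-- Channel extracted from a joint quantum state. -/
def qextr {n m : ℕ} (τ : Matrix (Fin n × Fin m) (Fin n × Fin m) ℂ)
    (h : (qproj τ).PosDef) : Fin m → Fin m → Matrix (Fin n) (Fin n) ℂ :=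
  fun k ℓ => ∑ i, ∑ j, (starRingEnd ℂ) (τ (i, k) (j, ℓ))
    • ((h.posSemidef.sqrt)⁻¹ * Matrix.single i j 1 * (h.posSemidef.sqrt)⁻¹)

/-- Backward predicate transformation `c ≪ q := ∑ k ℓ, q k ℓ • c k ℓ`. -/
def qbwd {n m : ℕ} (c : Fin m → Fin m → Matrix (Fin n) (Fin n) ℂ)
    (q : Matrix (Fin m) (Fin m) ℂ) : Matrix (Fin n) (Fin n) ℂ :=
  ∑ k, ∑ ℓ, q k ℓ • c k ℓ

/-- Quantum Bayesian Inference Theorem, backward direction: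
`M₁(τ|_{1 ⊗ q}) = (proj(τ)|^{extr(τ) ≪ q})ᵀ`, where lower conditioning of `τ`
by `1 ⊗ q` uses `√(1 ⊗ q) = 1 ⊗ √q`. -/
theorem quantum_bayesian_inference_backward {n m : ℕ}
    (τ : Matrix (Fin n × Fin m) (Fin n × Fin m) ℂ)
    (hτ : τ.PosSemidef) (hτtr : τ.trace = 1)
    (hproj : (qproj τ).PosDef)
    (q : Matrix (Fin m) (Fin m) ℂ)
    (hq : q.PosSemidef) (hq1 : (1 - q).PosSemidef)
    (hv : (τ * ((1 : Matrix (Fin n) (Fin n) ℂ) ⊗ₖ q)).trace ≠ 0)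
    (hv' : (qproj τ * qbwd (qextr τ hproj) q).trace ≠ 0) :
    ∀ i j : Fin n,
      (∑ k, (((τ * ((1 : Matrix (Fin n) (Fin n) ℂ) ⊗ₖ q)).trace)⁻¹
          • (((1 : Matrix (Fin n) (Fin n) ℂ) ⊗ₖ hq.sqrt) * τ
              * ((1 : Matrix (Fin n) (Fin n) ℂ) ⊗ₖ hq.sqrt))) (i, k) (j, k))
        = ((((qproj τ * qbwd (qextr τ hproj) q).trace)⁻¹
            • (hproj.posSemidef.sqrt * qbwd (qextr τ hproj) q
                * hproj.posSemidef.sqrt))ᵀ) i j := by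
  intro i j
  set R := hproj.posSemidef.sqrt with hRdef
  -- invertibility of R
  have hdet : IsUnit R.det := by
    have h2 : R.det * R.det = (qproj τ).det := by
      rw [← det_mul, hproj.posSemidef.sqrt_mul_self]
    refine isUnit_iff_ne_zero.mpr fun h => ?_
    rw [h, mul_zero] at h2
    exact hproj.det_pos.ne' h2.symm
  have hRR : R * R⁻¹ = 1 := mul_nonsing_inv _ hdet
  have hRR' : R⁻¹ * R = 1 := nonsing_inv_mul _ hdet
  -- Hermitian entries
  have hherm : ∀ x y, (starRingEnd ℂ) (τ x y) = τ y x := by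
    intro x y
    have := congrFun (congrFun hτ.1 y) x
    simpa [Matrix.conjTranspose_apply] using this
  -- the matrix C
  set C : Matrix (Fin n) (Fin n) ℂ :=
    Matrix.of (fun a c : Fin n => ∑ k, ∑ ℓ, q k ℓ * (starRingEnd ℂ) (τ (a, k) (c, ℓ)))
    with hCdef
  -- key: R * B * R = C
  have hB : R * qbwd (qextr τ hproj) q * R = C := by
    have hE : ∀ a c : Fin n, R * (R⁻¹ * Matrix.single a c (1:ℂ) * R⁻¹) * R
        = Matrix.single a c 1 := by
      intro a c
      simp only [← Matrix.mul_assoc]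
      rw [hRR, one_mul, Matrix.mul_assoc, hRR', mul_one]
    unfold qbwd qextr
    simp only [Matrix.mul_sum, Matrix.sum_mul, Matrix.mul_smul, Matrix.smul_mul, ← hRdef, hE]
    ext a c
    simp only [Matrix.sum_apply, Matrix.smul_apply, Matrix.single, smul_eq_mul,
      Matrix.of_apply, mul_ite, mul_one, mul_zero, Finset.sum_ite_eq, Finset.mem_univ, if_true,
      hCdef]
    congr 1; ext k; congr 1; ext l; congr 1
    simp [ite_and, Finset.sum_ite_eq']
  -- B in terms of C
  have hBeq : qbwd (qextr τ hproj) q = R⁻¹ * C * R⁻¹ := by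
    calc qbwd (qextr τ hproj) q
        = (R⁻¹ * R) * qbwd (qextr τ hproj) q * (R * R⁻¹) := by
          rw [hRR', hRR, one_mul, mul_one]
      _ = R⁻¹ * (R * qbwd (qextr τ hproj) q * R) * R⁻¹ := by
          simp only [Matrix.mul_assoc]
      _ = R⁻¹ * C * R⁻¹ := by rw [hB]
  -- trace identity 1 : tr (P * B) = tr C
  have htr1 : (qproj τ * qbwd (qextr τ hproj) q).trace = C.trace := by
    rw [hBeq, ← hproj.posSemidef.sqrt_mul_self, ← hRdef]
    have h1 : (R * R) * (R⁻¹ * C * R⁻¹) = R * (C * R⁻¹) := by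
      calc (R * R) * (R⁻¹ * C * R⁻¹) = R * ((R * R⁻¹) * (C * R⁻¹)) := by
            simp only [Matrix.mul_assoc]
        _ = R * (C * R⁻¹) := by rw [hRR, one_mul]
    rw [h1, Matrix.trace_mul_comm, Matrix.mul_assoc, hRR', mul_one]
  -- trace identity 2 : tr C = tr (τ * (1 ⊗ q))
  have htr2 : C.trace = (τ * ((1 : Matrix (Fin n) (Fin n) ℂ) ⊗ₖ q)).trace := by
    simp only [Matrix.trace, Matrix.diag, hCdef, Matrix.of_apply, Matrix.mul_apply,
      Matrix.kroneckerMap_apply, Matrix.one_apply, Fintype.sum_prod_type,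
      mul_ite, mul_one, mul_zero, ite_mul, zero_mul,
      Finset.sum_ite_irrel, Finset.sum_const_zero,
      Finset.sum_ite_eq, Finset.sum_ite_eq', Finset.mem_univ, if_true]
    refine Finset.sum_congr rfl fun a _ => ?_
    rw [Finset.sum_comm]
    refine Finset.sum_congr rfl fun k _ => Finset.sum_congr rfl fun ℓ _ => ?_
    rw [hherm]
    ring
  -- numerator identity
  have hnum : (∑ k, (((1 : Matrix (Fin n) (Fin n) ℂ) ⊗ₖ hq.sqrt) * τ
      * ((1 : Matrix (Fin n) (Fin n) ℂ) ⊗ₖ hq.sqrt)) (i, k) (j, k)) = C j i := by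
    have hS : ∀ d b, (∑ k, hq.sqrt d k * hq.sqrt k b) = q d b := by
      intro d b
      rw [← Matrix.mul_apply, hq.sqrt_mul_self]
    have lhs_eq : (∑ k, (((1 : Matrix (Fin n) (Fin n) ℂ) ⊗ₖ hq.sqrt) * τ
        * ((1 : Matrix (Fin n) (Fin n) ℂ) ⊗ₖ hq.sqrt)) (i, k) (j, k))
        = ∑ b, ∑ d, q d b * τ (i, b) (j, d) := by
      simp only [Matrix.mul_apply, Matrix.kroneckerMap_apply, Matrix.one_apply,
        Fintype.sum_prod_type, ite_mul, one_mul, zero_mul, mul_ite, mul_one, mul_zero,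
        Finset.sum_ite_eq, Finset.sum_ite_eq', Finset.mem_univ, if_true]
      simp only [ite_mul, zero_mul, Finset.sum_ite_irrel, Finset.sum_const_zero,
        Finset.sum_ite_eq, Finset.sum_ite_eq', Finset.mem_univ, if_true,
        Finset.sum_mul, Finset.mul_sum]
      simp_rw [← hS, Finset.sum_mul]
      conv_lhs => enter [2, x]; rw [Finset.sum_comm]
      rw [Finset.sum_comm]
      refine Finset.sum_congr rfl fun b _ => ?_
      rw [Finset.sum_comm]
      refine Finset.sum_congr rfl fun d _ => ?_
      refine Finset.sum_congr rfl fun x _ => ?_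
      ring
    rw [lhs_eq, hCdef]
    simp only [Matrix.of_apply]
    rw [Finset.sum_comm]
    refine Finset.sum_congr rfl fun d _ => Finset.sum_congr rfl fun b _ => ?_
    rw [hherm]
  -- assemble
  simp only [Matrix.smul_apply, Matrix.transpose_apply, smul_eq_mul, ← Finset.mul_sum]
  rw [hnum, hB, htr1, htr2]

end
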